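/- Let K be an infinite compact Hausdorff space and s₀ an accumulation point of a countably infinite subset of K. Then the sublattice X = {f ∈ C(K) : f is constant on some neighbourhood of s₀} is finitely uniformly complete but not uniformly complete. -/

import Mathlib

/-- `H_n`: positively homogeneous continuous functions `ℝⁿ → ℝ`. -/
def MemHn {n : ℕ} (f : (Fin n → ℝ) → ℝ) : Prop :=
  Continuous f ∧ ∀ (c : ℝ), 0 ≤ c → ∀ t, f (c • t) = c * f t

/-- the `i`-th coordinate projection, an element of `H_n`. -/
def projFn (n : ℕ) (i : Fin n) : (Fin n → ℝ) → ℝ := fun t => t i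

section VL
variable {X : Type*} [Lattice X] [AddCommGroup X] [Module ℝ X]

/-- A vector lattice homomorphism `H_n → X`, encoded as a map on all functions
that is linear and sup-preserving on members of `H_n`. -/
def IsVLHomHn {n : ℕ} (Φ : ((Fin n → ℝ) → ℝ) → X) : Prop :=
  (∀ f g, MemHn f → MemHn g → Φ (f + g) = Φ f + Φ g) ∧
  (∀ (c : ℝ) f, MemHn f → Φ (c • f) = c • Φ f) ∧
  (∀ f g, MemHn f → MemHn g → Φ (f ⊔ g) = Φ f ⊔ Φ g)

/-- The order ideal generated by `e`. -/
def Ie (e : X) : Set X := {x | ∃ l : ℝ, 0 ≤ l ∧ |x| ≤ l • e}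

/-- `‖x‖_e = inf {λ ≥ 0 : |x| ≤ λ e}`. -/
noncomputable def enorm (e x : X) : ℝ := sInf {l : ℝ | 0 ≤ l ∧ |x| ≤ l • e}

/-- A sublattice and linear subspace. -/
def IsSubl (S : Set X) : Prop :=
  (0 : X) ∈ S ∧ (∀ a ∈ S, ∀ b ∈ S, a + b ∈ S) ∧
  (∀ (c : ℝ), ∀ a ∈ S, c • a ∈ S) ∧ (∀ a ∈ S, ∀ b ∈ S, a ⊔ b ∈ S)

/-- `S` is closed in the carrier `C` with respect to the `‖·‖_e`-distance. -/
def ClosedIn (e : X) (C S : Set X) : Prop :=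
  ∀ x ∈ C, (∀ ε : ℝ, 0 < ε → ∃ y ∈ S, enorm e (x - y) < ε) → x ∈ S

/-- The closed sublattice of `C` generated by the set `A`. -/
def genClosedSubl (e : X) (C A : Set X) : Set X :=
  ⋂₀ {S : Set X | S ⊆ C ∧ A ⊆ S ∧ IsSubl S ∧ ClosedIn e C S}

/-- The norm `‖·‖_e` is complete on `S`: every `‖·‖_e`-Cauchy sequence in `S`
converges, in `‖·‖_e`, to an element of `S`. -/
def CompleteOn (e : X) (S : Set X) : Prop :=
  ∀ u : ℕ → X, (∀ k, u k ∈ S) →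
    (∀ ε : ℝ, 0 < ε → ∃ N, ∀ m ≥ N, ∀ n ≥ N, enorm e (u m - u n) < ε) →
    ∃ x ∈ S, ∀ ε : ℝ, 0 < ε → ∃ N, ∀ m ≥ N, enorm e (u m - x) < ε

end VL

/-- An Archimedean vector lattice. -/
def IsArchimedeanVL (X : Type*) [Lattice X] [AddCommGroup X] : Prop :=
  ∀ x y : X, 0 ≤ x → 0 ≤ y → (∀ n : ℕ, n • x ≤ y) → x = 0

section CKHelpers

variable {K : Type*} [TopologicalSpace K] [CompactSpace K] [T2Space K] [Nonempty K]

/-- sup-norm bound is equivalent to a pointwise bound (nonempty domain). -/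
lemma cnorm_le_iff (z : C(K, ℝ)) (C : ℝ) : ‖z‖ ≤ C ↔ ∀ x, |z x| ≤ C := by
  constructor
  · intro h x
    calc |z x| = ‖z x‖ := (Real.norm_eq_abs _).symm
      _ ≤ ‖z‖ := z.norm_coe_le_norm x
      _ ≤ C := h
  · intro h
    have hC : 0 ≤ C := le_trans (abs_nonneg _) (h (Classical.arbitrary K))
    exact (ContinuousMap.norm_le _ hC).2 fun x => by rw [Real.norm_eq_abs]; exact h x

lemma abs_le_smul_const_iff (c l : ℝ) (z : C(K, ℝ)) :
    |z| ≤ l • ContinuousMap.const K c ↔ ‖z‖ ≤ l * c := by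
  rw [cnorm_le_iff, ContinuousMap.le_def]
  apply forall_congr'
  intro x
  simp

lemma enorm_const {c : ℝ} (hc : 0 < c) (z : C(K, ℝ)) :
    enorm (ContinuousMap.const K c) z = ‖z‖ / c := by
  unfold _root_.enorm
  have hset : {l : ℝ | 0 ≤ l ∧ |z| ≤ l • ContinuousMap.const K c} = Set.Ici (‖z‖ / c) := by
    ext l
    simp only [Set.mem_setOf_eq, Set.mem_Ici, abs_le_smul_const_iff]
    constructor
    · rintro ⟨-, h1⟩
      exact (div_le_iff₀ hc).2 h1
    · intro h
      exact ⟨le_trans (div_nonneg (norm_nonneg z) hc.le) h, (div_le_iff₀ hc).1 h⟩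
  rw [hset, csInf_Ici]

lemma geo_bound (n m : ℕ) : ∑ k ∈ Finset.Ico n m, ((2:ℝ)⁻¹) ^ (k + 1) ≤ (2:ℝ)⁻¹ ^ n := by
  rw [Finset.sum_Ico_eq_sum_range (fun k => ((2:ℝ)⁻¹) ^ (k + 1)) n m]
  have h1 : ∀ j : ℕ, ((2:ℝ)⁻¹) ^ (n + j + 1) = ((2:ℝ)⁻¹) ^ (n + 1) * ((2:ℝ)⁻¹) ^ j := by
    intro j; ring
  calc ∑ j ∈ Finset.range (m - n), ((2:ℝ)⁻¹) ^ (n + j + 1)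
      = ((2:ℝ)⁻¹) ^ (n + 1) * ∑ j ∈ Finset.range (m - n), ((2:ℝ)⁻¹) ^ j := by
        rw [Finset.mul_sum]; exact Finset.sum_congr rfl fun j _ => h1 j
    _ ≤ ((2:ℝ)⁻¹) ^ (n + 1) * 2 := by
        apply mul_le_mul_of_nonneg_left _ (by positivity)
        have := sum_geometric_two_le (m - n)
        simpa [one_div] using this
    _ = (2:ℝ)⁻¹ ^ n := by ring

end CKHelpers

/-- the sublattice
`X = {f ∈ C(K) : f is constant on a neighbourhood of s₀}` of `C(K)` is
finitely uniformly complete but not uniformly complete.  (All lattice/linear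
operations and the norms `‖·‖_e` are computed in the ambient lattice `C(K)`,
of which `X` is a sublattice; the order ideal of `X` generated by `e ∈ X⁺` is
`I_e ∩ X`.) -/


theorem stmt15 {K : Type*} [TopologicalSpace K] [CompactSpace K] [T2Space K]
    [Infinite K]
    (s₀ : K) (S : Set K) (hS : S.Countable) (hSinf : S.Infinite)
    (hacc : AccPt s₀ (Filter.principal S))
    (X : Set C(K, ℝ))
    (hX : X = {f : C(K, ℝ) | ∃ U ∈ nhds s₀, ∀ t ∈ U, f t = f s₀}) :
    -- `X` is finitely uniformly complete:
    (∀ (n : ℕ) (f : Fin n → C(K, ℝ)), (∀ i, f i ∈ X) →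
      ∃ e ∈ X, 0 ≤ e ∧ (∀ i, |f i| ≤ e) ∧
        CompleteOn e (genClosedSubl e (Ie e ∩ X) (Set.range f))) ∧
    -- but not uniformly complete:
    ¬ (∀ e ∈ X, 0 ≤ e → CompleteOn e (Ie e ∩ X)) := by
  have hpoint : ∀ (z : C(K, ℝ)) (t : K), |z t| ≤ ‖z‖ := fun z t => (cnorm_le_iff z ‖z‖).1 le_rfl t
  subst hX
  constructor
  · -- part 1 : finitely uniformly complete
    intro n f hf
    choose U hU hUc using hf
    set c : ℝ := 1 + ∑ i, ‖f i‖ with hcdef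
    have hsum : (0:ℝ) ≤ ∑ i, ‖f i‖ := Finset.sum_nonneg fun i _ => norm_nonneg _
    have hc1 : (1:ℝ) ≤ c := by simp only [hcdef]; linarith
    have hc0 : (0:ℝ) < c := lt_of_lt_of_le one_pos hc1
    set e : C(K, ℝ) := ContinuousMap.const K c with hedef
    have heX : e ∈ {f : C(K, ℝ) | ∃ U ∈ nhds s₀, ∀ t ∈ U, f t = f s₀} :=
      ⟨Set.univ, Filter.univ_mem, fun t _ => rfl⟩
    have he0 : (0:C(K, ℝ)) ≤ e := ContinuousMap.le_def.2 fun t => by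
      simpa [hedef] using hc0.le
    have hfe : ∀ i, |f i| ≤ e := by
      intro i
      refine ContinuousMap.le_def.2 fun t => ?_
      have h1 : |f i t| ≤ ‖f i‖ := hpoint (f i) t
      have h2 : ‖f i‖ ≤ ∑ j, ‖f j‖ :=
        Finset.single_le_sum (fun j _ => norm_nonneg (f j)) (Finset.mem_univ i)
      have : (|f i| : C(K, ℝ)) t = |f i t| := by simp
      rw [this]
      simp only [hedef, ContinuousMap.const_apply, hcdef]
      linarith
    -- basic facts on enorm with constant e
    have henorm : ∀ z : C(K, ℝ), enorm e z = ‖z‖ / c := fun z => enorm_const hc0 z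
    have henorm_le : ∀ z : C(K, ℝ), enorm e z ≤ ‖z‖ := fun z => by
      rw [henorm]; exact div_le_self (norm_nonneg z) hc1
    have hnorm_le : ∀ z : C(K, ℝ), ‖z‖ ≤ c * enorm e z := fun z => by
      rw [henorm, mul_div_cancel₀ _ (ne_of_gt hc0)]
    have hIe : ∀ z : C(K, ℝ), z ∈ Ie e := by
      intro z
      refine ⟨‖z‖, norm_nonneg z, ?_⟩
      rw [hedef, abs_le_smul_const_iff]
      exact le_mul_of_one_le_right (norm_nonneg z) hc1
    -- the common neighbourhood and the closed sublattice Y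
    set W : Set K := ⋂ i, U i with hWdef
    have hW : W ∈ nhds s₀ := Filter.iInter_mem.2 hU
    set Y : Set C(K, ℝ) := {g : C(K, ℝ) | ∀ t ∈ W, g t = g s₀} with hYdef
    have hYX : Y ⊆ {f : C(K, ℝ) | ∃ U ∈ nhds s₀, ∀ t ∈ U, f t = f s₀} :=
      fun g hg => ⟨W, hW, hg⟩
    have hYapprox : ∀ x : C(K, ℝ), (∀ ε : ℝ, 0 < ε → ∃ y ∈ Y, ‖x - y‖ < ε) → x ∈ Y := by
      intro x hx t ht
      by_contra hne
      have hd : 0 < |x t - x s₀| := abs_pos.2 (sub_ne_zero.2 hne)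
      obtain ⟨y, hyY, hy⟩ := hx (|x t - x s₀| / 2) (by linarith)
      have h1 : |x t - y t| ≤ ‖x - y‖ := by
        have := hpoint (x - y) t; simpa using this
      have h2 : |x s₀ - y s₀| ≤ ‖x - y‖ := by
        have := hpoint (x - y) s₀; simpa using this
      have h3 : y t = y s₀ := hyY t ht
      have : |x t - x s₀| ≤ |x t - y t| + |x s₀ - y s₀| := by
        rw [h3] at h1
        calc |x t - x s₀| = |(x t - y s₀) - (x s₀ - y s₀)| := by ring_nf
          _ ≤ |x t - y s₀| + |x s₀ - y s₀| := abs_sub _ _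
          _ = |x t - y t| + |x s₀ - y s₀| := by rw [h3]
      linarith
    have hYclosed : ClosedIn e (Ie e ∩ {f : C(K, ℝ) | ∃ U ∈ nhds s₀, ∀ t ∈ U, f t = f s₀}) Y := by
      intro x _ happ
      apply hYapprox
      intro ε hε
      obtain ⟨y, hyY, hy⟩ := happ (ε / c) (by positivity)
      refine ⟨y, hyY, lt_of_le_of_lt (hnorm_le _) ?_⟩
      have := mul_lt_mul_of_pos_left hy hc0
      rwa [mul_div_cancel₀ _ (ne_of_gt hc0)] at this
    have hYsubl : IsSubl Y := by
      refine ⟨fun t _ => rfl, ?_, ?_, ?_⟩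
      · intro a ha b hb t ht
        simp only [ContinuousMap.add_apply]
        rw [ha t ht, hb t ht]
      · intro l a ha t ht
        simp only [ContinuousMap.smul_apply]
        rw [ha t ht]
      · intro a ha b hb t ht
        simp only [ContinuousMap.sup_apply]
        rw [ha t ht, hb t ht]
    have hYmem : Y ∈ {T : Set C(K, ℝ) |
        T ⊆ Ie e ∩ {f : C(K, ℝ) | ∃ U ∈ nhds s₀, ∀ t ∈ U, f t = f s₀} ∧
        Set.range f ⊆ T ∧ IsSubl T ∧
        ClosedIn e (Ie e ∩ {f : C(K, ℝ) | ∃ U ∈ nhds s₀, ∀ t ∈ U, f t = f s₀}) T} := by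
      refine ⟨fun g hg => ⟨hIe g, hYX hg⟩, ?_, hYsubl, hYclosed⟩
      rintro - ⟨i, rfl⟩ t ht
      have hti : t ∈ U i := Set.mem_iInter.1 ht i
      have hsi : s₀ ∈ U i := mem_of_mem_nhds (hU i)
      rw [hUc i t hti]
    refine ⟨e, heX, he0, hfe, ?_⟩
    set G := genClosedSubl e
      (Ie e ∩ {f : C(K, ℝ) | ∃ U ∈ nhds s₀, ∀ t ∈ U, f t = f s₀}) (Set.range f) with hGdef
    have hGY : G ⊆ Y := Set.sInter_subset_of_mem hYmem
    intro u hu hCau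
    -- u is Cauchy in sup norm
    have hCauchy : CauchySeq u := by
      rw [Metric.cauchySeq_iff]
      intro ε hε
      obtain ⟨N, hN⟩ := hCau (ε / c) (by positivity)
      refine ⟨N, fun m hm k hk => ?_⟩
      have h1 := hN m hm k hk
      have h2 : ‖u m - u k‖ < ε := by
        have := mul_lt_mul_of_pos_left h1 hc0
        rw [mul_div_cancel₀ _ (ne_of_gt hc0)] at this
        exact lt_of_le_of_lt (hnorm_le _) this
      rwa [dist_eq_norm]
    obtain ⟨x, hx⟩ := cauchySeq_tendsto_of_complete hCauchy
    have htend : ∀ ε : ℝ, 0 < ε → ∃ N, ∀ m ≥ N, ‖u m - x‖ < ε := by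
      intro ε hε
      obtain ⟨N, hN⟩ := (Metric.tendsto_atTop.1 hx) ε hε
      exact ⟨N, fun m hm => by rw [← dist_eq_norm]; exact hN m hm⟩
    have hxY : x ∈ Y := by
      apply hYapprox
      intro ε hε
      obtain ⟨N, hN⟩ := htend ε hε
      exact ⟨u N, hGY (hu N), by rw [norm_sub_rev]; exact hN N le_rfl⟩
    have hxC : x ∈ Ie e ∩ {f : C(K, ℝ) | ∃ U ∈ nhds s₀, ∀ t ∈ U, f t = f s₀} :=
      ⟨hIe x, hYX hxY⟩
    have hxG : x ∈ G := by
      rw [hGdef, genClosedSubl, Set.mem_sInter]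
      rintro T hT
      have hGT : G ⊆ T := Set.sInter_subset_of_mem hT
      obtain ⟨hTC, hTA, hTsub, hTclosed⟩ := hT
      apply hTclosed x hxC
      intro ε hε
      obtain ⟨N, hN⟩ := htend ε hε
      refine ⟨u N, hGT (hu N), ?_⟩
      refine lt_of_le_of_lt (henorm_le _) ?_
      rw [norm_sub_rev]; exact hN N le_rfl
    refine ⟨x, hxG, fun ε hε => ?_⟩
    obtain ⟨N, hN⟩ := htend ε hε
    exact ⟨N, fun m hm => lt_of_le_of_lt (henorm_le _) (hN m hm)⟩
  · -- part 2 : not uniformly complete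
    intro hcomp
    obtain ⟨g, hg⟩ := hS.exists_eq_range hSinf.nonempty
    -- Urysohn bump functions
    have claim : ∀ m : ℕ, ∃ (w : C(K, ℝ)) (Cs : Set K), Cs ∈ nhds s₀ ∧
        (∀ t ∈ Cs, w t = 0) ∧ (g m ≠ s₀ → w (g m) = 1) ∧ ∀ t, 0 ≤ w t ∧ w t ≤ 1 := by
      intro m
      by_cases hm : g m = s₀
      · exact ⟨0, Set.univ, Filter.univ_mem, fun t _ => rfl, fun h => absurd hm h,
          fun t => ⟨le_rfl, zero_le_one⟩⟩
      · have hcl : IsClosed ({g m} : Set K) := isClosed_singleton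
        have hopen : ({g m}ᶜ : Set K) ∈ nhds s₀ :=
          hcl.isOpen_compl.mem_nhds (by simp [Ne.symm hm])
        obtain ⟨Cs, hCs, hCcl, hCsub⟩ := exists_mem_nhds_isClosed_subset hopen
        have hdisj : Disjoint Cs ({g m} : Set K) :=
          Set.disjoint_singleton_right.2 fun h => (hCsub h) rfl
        obtain ⟨w, hw0, hw1, hwb⟩ := exists_continuous_zero_one_of_isClosed hCcl hcl hdisj
        exact ⟨w, Cs, hCs, fun t ht => by simpa using hw0 ht,
          fun _ => by simpa using hw1 (Set.mem_singleton _), fun t => hwb t⟩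
    choose w C hC hC0 hC1 hCb using claim
    -- partial sums
    set v : ℕ → C(K, ℝ) := fun m => ∑ k ∈ Finset.range m, ((2:ℝ)⁻¹) ^ (k + 1) • w k with hvdef
    have hva : ∀ (m : ℕ) (t : K), v m t = ∑ k ∈ Finset.range m, ((2:ℝ)⁻¹) ^ (k + 1) * w k t := by
      intro m t
      simp [hvdef]
    set e : C(K, ℝ) := ContinuousMap.const K 1 with hedef
    have heX : e ∈ {f : C(K, ℝ) | ∃ U ∈ nhds s₀, ∀ t ∈ U, f t = f s₀} :=
      ⟨Set.univ, Filter.univ_mem, fun t _ => rfl⟩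
    have he0 : (0:C(K, ℝ)) ≤ e := ContinuousMap.le_def.2 fun t => by
      simpa [hedef] using zero_le_one
    have henorm : ∀ z : C(K, ℝ), enorm e z = ‖z‖ := fun z => by
      rw [hedef, enorm_const one_pos, div_one]
    have hIe : ∀ z : C(K, ℝ), z ∈ Ie e := by
      intro z
      refine ⟨‖z‖, norm_nonneg z, ?_⟩
      rw [hedef, abs_le_smul_const_iff, mul_one]
    -- membership of partial sums
    have hvX : ∀ m, v m ∈ Ie e ∩ {f : C(K, ℝ) | ∃ U ∈ nhds s₀, ∀ t ∈ U, f t = f s₀} := by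
      intro m
      refine ⟨hIe (v m), ⋂ k ∈ Finset.range m, C k,
        (Filter.biInter_finset_mem _).2 fun k _ => hC k, ?_⟩
      intro t ht
      have hvz : ∀ s : K, (∀ k < m, w k s = 0) → v m s = 0 := by
        intro s hs
        rw [hva]
        apply Finset.sum_eq_zero
        intro k hk
        rw [hs k (Finset.mem_range.1 hk), mul_zero]
      have h1 : v m t = 0 := hvz t fun k hk =>
        hC0 k t (Set.mem_iInter₂.1 ht k (Finset.mem_range.2 hk))
      have h2 : v m s₀ = 0 := hvz s₀ fun k _ => hC0 k s₀ (mem_of_mem_nhds (hC k))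
      rw [h1, h2]
    -- Cauchy estimate
    have hwnorm : ∀ k, ‖w k‖ ≤ 1 := by
      intro k
      rw [cnorm_le_iff]
      intro t
      exact abs_le.2 ⟨by linarith [(hCb k t).1], (hCb k t).2⟩
    have hkey : ∀ nn mm : ℕ, nn ≤ mm → ‖v mm - v nn‖ ≤ ((2:ℝ)⁻¹) ^ nn := by
      intro nn mm h
      have hsub : v mm - v nn = ∑ k ∈ Finset.Ico nn mm, ((2:ℝ)⁻¹) ^ (k + 1) • w k := by
        rw [hvdef]
        exact (Finset.sum_Ico_eq_sub _ h).symm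
      rw [hsub]
      calc ‖∑ k ∈ Finset.Ico nn mm, ((2:ℝ)⁻¹) ^ (k + 1) • w k‖
          ≤ ∑ k ∈ Finset.Ico nn mm, ‖((2:ℝ)⁻¹) ^ (k + 1) • w k‖ := norm_sum_le _ _
        _ ≤ ∑ k ∈ Finset.Ico nn mm, ((2:ℝ)⁻¹) ^ (k + 1) := by
            apply Finset.sum_le_sum
            intro k _
            rw [cnorm_le_iff]
            intro t
            have hb := hCb k t
            have happ : (((2:ℝ)⁻¹ ^ (k + 1)) • w k) t = ((2:ℝ)⁻¹) ^ (k + 1) * w k t := by simp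
            rw [happ, abs_mul, abs_of_nonneg (by positivity : (0:ℝ) ≤ ((2:ℝ)⁻¹) ^ (k + 1))]
            have h1 : |w k t| ≤ 1 := abs_le.2 ⟨by linarith [hb.1], hb.2⟩
            exact mul_le_of_le_one_right (by positivity) h1
        _ ≤ ((2:ℝ)⁻¹) ^ nn := geo_bound nn mm
    have hCau : ∀ ε : ℝ, 0 < ε → ∃ N, ∀ m ≥ N, ∀ k ≥ N, enorm e (v m - v k) < ε := by
      intro ε hε
      obtain ⟨N, hN⟩ := exists_pow_lt_of_lt_one hε (show (2:ℝ)⁻¹ < 1 by norm_num)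
      refine ⟨N, fun m hm k hk => ?_⟩
      rw [henorm]
      rcases le_total k m with hkm | hmk
      · calc ‖v m - v k‖ ≤ ((2:ℝ)⁻¹) ^ k := hkey k m hkm
          _ ≤ ((2:ℝ)⁻¹) ^ N := pow_le_pow_of_le_one (by norm_num) (by norm_num) hk
          _ < ε := hN
      · rw [norm_sub_rev]
        calc ‖v k - v m‖ ≤ ((2:ℝ)⁻¹) ^ m := hkey m k hmk
          _ ≤ ((2:ℝ)⁻¹) ^ N := pow_le_pow_of_le_one (by norm_num) (by norm_num) hm
          _ < ε := hN
    obtain ⟨x, ⟨hxI, hxX⟩, hconv⟩ := hcomp e heX he0 v hvX hCau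
    have hconv' : ∀ ε : ℝ, 0 < ε → ∃ N, ∀ m ≥ N, ‖v m - x‖ < ε := by
      intro ε hε
      obtain ⟨N, hN⟩ := hconv ε hε
      exact ⟨N, fun m hm => by rw [← henorm]; exact hN m hm⟩
    -- x s₀ = 0
    have hvs₀ : ∀ m, v m s₀ = 0 := by
      intro m
      rw [hva]
      apply Finset.sum_eq_zero
      intro k _
      rw [hC0 k s₀ (mem_of_mem_nhds (hC k)), mul_zero]
    have hxs₀ : x s₀ = 0 := by
      by_contra hne
      have hd : 0 < |x s₀| := abs_pos.2 hne
      obtain ⟨N, hN⟩ := hconv' |x s₀| hd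
      have h1 : |v N s₀ - x s₀| ≤ ‖v N - x‖ := by simpa using hpoint (v N - x) s₀
      rw [hvs₀ N] at h1
      have := hN N le_rfl
      rw [abs_sub_comm] at h1
      simp only [sub_zero] at h1
      linarith
    -- x is constant on a neighbourhood U of s₀
    obtain ⟨U, hU, hUc⟩ := hxX
    obtain ⟨y, ⟨hyU, hyS⟩, hys⟩ := (accPt_iff_nhds (x := s₀) (C := S)).1 hacc U hU
    rw [hg] at hyS
    obtain ⟨nn, rfl⟩ := hyS
    -- lower bound at g nn
    have hlow : ∀ m, nn < m → ((2:ℝ)⁻¹) ^ (nn + 1) ≤ v m (g nn) := by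
      intro m hm
      rw [hva]
      have h1 : ((2:ℝ)⁻¹) ^ (nn + 1) * w nn (g nn) ≤
          ∑ k ∈ Finset.range m, ((2:ℝ)⁻¹) ^ (k + 1) * w k (g nn) := by
        apply Finset.single_le_sum (f := fun k => ((2:ℝ)⁻¹) ^ (k + 1) * w k (g nn))
        · intro k _
          exact mul_nonneg (by positivity) (hCb k (g nn)).1
        · exact Finset.mem_range.2 hm
      rw [hC1 nn hys, mul_one] at h1
      exact h1
    have hxlow : ((2:ℝ)⁻¹) ^ (nn + 1) ≤ x (g nn) := by
      by_contra hlt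
      push_neg at hlt
      set ε := ((2:ℝ)⁻¹) ^ (nn + 1) - x (g nn) with hεdef
      have hε : 0 < ε := by simp only [hεdef]; linarith
      obtain ⟨N, hN⟩ := hconv' ε hε
      set m := max N (nn + 1) with hmdef
      have h1 : ‖v m - x‖ < ε := hN m (le_max_left _ _)
      have h2 : ((2:ℝ)⁻¹) ^ (nn + 1) ≤ v m (g nn) :=
        hlow m (lt_of_lt_of_le (Nat.lt_succ_self nn) (le_max_right _ _))
      have h3 : |v m (g nn) - x (g nn)| ≤ ‖v m - x‖ := by simpa using hpoint (v m - x) (g nn)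
      have h4 : v m (g nn) - x (g nn) ≤ |v m (g nn) - x (g nn)| := le_abs_self _
      simp only [hεdef] at h1
      linarith
    have hfin : x (g nn) = 0 := by rw [hUc (g nn) hyU, hxs₀]
    have : (0:ℝ) < ((2:ℝ)⁻¹) ^ (nn + 1) := by positivity
    linarith
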